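/- Local L² growth bound for score functions: if S has mean zero and variance at most K, and X = S + Z with Z ~ N(0,τ) independent of S, then for every B > 1, ∫_{−B√τ}^{B√τ} ρ(u)² du ≤ (8B³/(√τ·e))·(3 + 2K/τ), where ρ is the score function of X. -/

import Mathlib

open MeasureTheory Real

/-- The centered Gaussian density with variance `t`. -/
noncomputable def gauss (t x : ℝ) : ℝ :=
  (Real.sqrt (2 * Real.pi * t))⁻¹ * Real.exp (-(x ^ 2) / (2 * t))

lemma aux_texp (t : ℝ) : t * Real.exp (-t) ≤ Real.exp (-1) := by
  have h2 : t ≤ Real.exp (t - 1) := by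
    have := Real.add_one_le_exp (t - 1); linarith
  calc t * Real.exp (-t) ≤ Real.exp (t - 1) * Real.exp (-t) :=
        mul_le_mul_of_nonneg_right h2 (Real.exp_nonneg _)
    _ = Real.exp (-1) := by rw [← Real.exp_add]; ring_nf

lemma aux_key (A τ x : ℝ) (hτ : 0 < τ) (hA : 1 ≤ A) :
    |x| * Real.exp (-(x ^ 2) / (2 * τ)) ≤
      Real.sqrt (A * τ / Real.exp 1) * Real.exp (-(x ^ 2) / (2 * τ)) ^ (1 - 1 / A) := by
  have hA0 : (0:ℝ) < A := by linarith
  have hrw : Real.exp (-(x ^ 2) / (2 * τ)) ^ (1 - 1 / A)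
      = Real.exp ((-(x ^ 2) / (2 * τ)) * (1 - 1 / A)) := (Real.exp_mul _ _).symm
  have hsplit : Real.exp (-(x ^ 2) / (2 * τ))
      = Real.exp (-(x ^ 2) / (2 * A * τ)) * Real.exp ((-(x ^ 2) / (2 * τ)) * (1 - 1 / A)) := by
    rw [← Real.exp_add]
    congr 1
    field_simp
    ring
  have hE2 : Real.exp (-(x ^ 2) / (2 * A * τ)) ^ 2 = Real.exp (-(x ^ 2 / (A * τ))) := by
    rw [pow_two, ← Real.exp_add]
    congr 1
    field_simp
    ring
  have hsq : (|x| * Real.exp (-(x ^ 2) / (2 * A * τ))) ^ 2 ≤ A * τ / Real.exp 1 := by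
    have h1 : (|x| * Real.exp (-(x ^ 2) / (2 * A * τ))) ^ 2
        = (A * τ) * ((x ^ 2 / (A * τ)) * Real.exp (-(x ^ 2 / (A * τ)))) := by
      rw [mul_pow, sq_abs, hE2]
      field_simp
    rw [h1]
    have h2 := aux_texp (x ^ 2 / (A * τ))
    have h3 : (A * τ) * ((x ^ 2 / (A * τ)) * Real.exp (-(x ^ 2 / (A * τ))))
        ≤ (A * τ) * Real.exp (-1) := by
      apply mul_le_mul_of_nonneg_left h2 (by positivity)
    refine h3.trans ?_
    rw [Real.exp_neg, div_eq_mul_inv]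
  have hmain : |x| * Real.exp (-(x ^ 2) / (2 * A * τ)) ≤ Real.sqrt (A * τ / Real.exp 1) := by
    have h0 : 0 ≤ |x| * Real.exp (-(x ^ 2) / (2 * A * τ)) := by positivity
    calc |x| * Real.exp (-(x ^ 2) / (2 * A * τ))
        = Real.sqrt ((|x| * Real.exp (-(x ^ 2) / (2 * A * τ))) ^ 2) := by
          rw [Real.sqrt_sq h0]
      _ ≤ Real.sqrt (A * τ / Real.exp 1) := Real.sqrt_le_sqrt hsq
  calc |x| * Real.exp (-(x ^ 2) / (2 * τ))
      = (|x| * Real.exp (-(x ^ 2) / (2 * A * τ))) * Real.exp ((-(x ^ 2) / (2 * τ)) * (1 - 1 / A)) := by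
        rw [hsplit]; ring
    _ ≤ Real.sqrt (A * τ / Real.exp 1) * Real.exp ((-(x ^ 2) / (2 * τ)) * (1 - 1 / A)) :=
        mul_le_mul_of_nonneg_right hmain (Real.exp_nonneg _)
    _ = Real.sqrt (A * τ / Real.exp 1) * Real.exp (-(x ^ 2) / (2 * τ)) ^ (1 - 1 / A) := by
        rw [hrw]

set_option maxHeartbeats 1000000 in
/-- Local L² growth bound for the score function of a normally perturbed variable:
`∫_{−B√τ}^{B√τ} ρ(u)² du ≤ (8B³/(√τ e))(3 + 2K/τ)`. -/
theorem stmt7 (μ : Measure ℝ) [IsProbabilityMeasure μ] (τ K : ℝ) (hτ : 0 < τ)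
    (hint : Integrable (fun s => s) μ) (hint2 : Integrable (fun s => s ^ 2) μ)
    (hmean : ∫ s, s ∂μ = 0) (hvar : ∫ s, s ^ 2 ∂μ ≤ K)
    (p p' : ℝ → ℝ)
    (hp : ∀ x, p x = ∫ s, gauss τ (x - s) ∂μ)
    (hp' : ∀ x, p' x = ∫ s, -((x - s) / τ) * gauss τ (x - s) ∂μ) :
    ∀ B : ℝ, 1 < B →
      ∫ u in (-(B * Real.sqrt τ))..(B * Real.sqrt τ), (p' u / p u) ^ 2
        ≤ 8 * B ^ 3 / (Real.sqrt τ * Real.exp 1) * (3 + 2 * K / τ) := by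
  intro B hB
  have hτ' : (0:ℝ) < Real.sqrt τ := Real.sqrt_pos.mpr hτ
  have hst2 : Real.sqrt τ ^ 2 = τ := Real.sq_sqrt hτ.le
  have hB0 : (0:ℝ) < B := lt_trans one_pos hB
  have hK0 : (0:ℝ) ≤ K := le_trans (integral_nonneg fun s => sq_nonneg s) hvar
  have hπ : (0:ℝ) < 2 * Real.pi * τ := by positivity
  have hc0 : (0:ℝ) < (Real.sqrt (2 * Real.pi * τ))⁻¹ := by positivity
  have he1 : (1:ℝ) < Real.exp 1 := by linarith [Real.exp_one_gt_d9]
  have hepos : (0:ℝ) < Real.exp 1 := by linarith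
  obtain ⟨c, hc⟩ : ∃ c : ℝ, c = Real.exp 1 / (Real.exp 1 - 1) := ⟨_, rfl⟩
  have hcpos : 0 < c := by rw [hc]; exact div_pos hepos (by linarith)
  obtain ⟨Q, hQdef⟩ : ∃ Q : ℝ, Q = (9/4) * (B ^ 2 * τ) + (9/5) * (c * K) := ⟨_, rfl⟩
  have hcK : 0 ≤ c * K := mul_nonneg hcpos.le hK0
  have hB2 : (1:ℝ) ≤ B ^ 2 := by nlinarith
  have hQ0 : 0 ≤ Q := by rw [hQdef]; positivity
  obtain ⟨A, hAdef⟩ : ∃ A : ℝ, A = 2 + Q / τ := ⟨_, rfl⟩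
  have hA174 : (17/4:ℝ) ≤ A := by
    have h1 : (9/4) * B ^ 2 ≤ Q / τ := by
      rw [le_div_iff₀ hτ]; nlinarith
    rw [hAdef]; nlinarith
  have hA1 : (1:ℝ) ≤ A := by linarith
  have hA0 : (0:ℝ) < A := by linarith
  obtain ⟨r, hrdef⟩ : ∃ r : ℝ, r = 1 - 1 / A := ⟨_, rfl⟩
  have hr0 : 0 ≤ r := by
    have h1 : 1 / A ≤ 1 := by rw [div_le_one hA0]; linarith
    rw [hrdef]; linarith
  have hr1 : r ≤ 1 := by
    have h1 : 0 < 1 / A := by positivity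
    rw [hrdef]; linarith
  -- Chebyshev lower bound on the measure of E = {s | s² ≤ cK}
  obtain ⟨E, hEdef⟩ : ∃ E : Set ℝ, E = {s : ℝ | s ^ 2 ≤ c * K} := ⟨_, rfl⟩
  have hEm : MeasurableSet E := by
    rw [hEdef]
    have : Measurable fun s : ℝ => s ^ 2 := by fun_prop
    exact measurableSet_le this measurable_const
  have hcheb : Real.exp (-1) ≤ (μ E).toReal := by
    have hec : Real.exp (-1) = 1 - 1 / c := by
      rw [Real.exp_neg, hc]
      field_simp
      ring
    rcases eq_or_lt_of_le hK0 with hKz | hKpos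
    · have hint0 : ∫ s, s ^ 2 ∂μ = 0 :=
        le_antisymm (hKz ▸ hvar) (integral_nonneg fun s => sq_nonneg s)
      have hae : ∀ᵐ s ∂μ, s ∈ E := by
        have h := (integral_eq_zero_iff_of_nonneg
          (fun s => sq_nonneg s) hint2).mp hint0
        filter_upwards [h] with s hs
        have hs2 : s ^ 2 = 0 := hs
        rw [hEdef]; simp only [Set.mem_setOf_eq, hs2]; positivity
      have hone : μ E = 1 := by
        have h0 : μ Eᶜ = 0 := by
          rw [← compl_compl E] at hae
          simp [ae_iff] at hae; exact hae
        have h1 := measure_add_measure_compl (μ := μ) hEm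
        rw [h0, add_zero] at h1
        simpa using h1
      rw [hone]
      simp only [ENNReal.toReal_one]
      have : 0 < 1 / c := by positivity
      rw [hec]; linarith
    · have hFm : MeasurableSet Eᶜ := hEm.compl
      have hub : (μ Eᶜ).toReal * (c * K) ≤ K := by
        have h1 : ∫ s, Eᶜ.indicator (fun _ => c * K) s ∂μ ≤ ∫ s, s ^ 2 ∂μ := by
          apply integral_mono ((integrable_const _).indicator hFm) hint2
          intro s
          by_cases hs : s ∈ Eᶜ
          · rw [Set.indicator_of_mem hs]
            rw [hEdef] at hs
            simp only [Set.mem_compl_iff, Set.mem_setOf_eq, not_le] at hs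
            exact le_of_lt hs
          · rw [Set.indicator_of_notMem hs]; exact sq_nonneg s
        rw [integral_indicator_const _ hFm, smul_eq_mul] at h1
        change (μ Eᶜ).toReal * (c * K) ≤ _ at h1
        linarith
      have hμF : (μ Eᶜ).toReal ≤ 1 / c := by
        rw [le_div_iff₀ hcpos]
        refine le_of_mul_le_mul_right ?_ hKpos
        calc ((μ Eᶜ).toReal * c) * K = (μ Eᶜ).toReal * (c * K) := by ring
          _ ≤ K := hub
          _ = 1 * K := (one_mul K).symm
      have hsum : (μ E).toReal + (μ Eᶜ).toReal = 1 := by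
        rw [← ENNReal.toReal_add (measure_ne_top μ E) (measure_ne_top μ Eᶜ),
          measure_add_measure_compl hEm]
        simp
      rw [hec]; linarith
  -- numeric bound
  have hnum : Real.exp 1 * A ≤ 4 * B ^ 2 * (3 + 2 * K / τ) := by
    have hk0 : (0:ℝ) ≤ K / τ := div_nonneg hK0 hτ.le
    have heU : Real.exp 1 < 2.7182818286 := Real.exp_one_lt_d9
    have heL : 2.7182818283 < Real.exp 1 := Real.exp_one_gt_d9
    have hArw : A = 2 + (9/4) * B ^ 2 + (9/5) * c * (K / τ) := by
      rw [hAdef, hQdef]; field_simp; ring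
    have hce : c * Real.exp 1 ≤ 40 / 9 := by
      rw [hc, div_mul_eq_mul_div, div_le_div_iff₀ (by linarith) (by norm_num)]
      nlinarith
    have h1 : (c * Real.exp 1) * (K / τ) ≤ (40 / 9) * (K / τ) :=
      mul_le_mul_of_nonneg_right hce hk0
    have h2 : 0 ≤ (B ^ 2 - 1) * (K / τ) := mul_nonneg (by linarith) hk0
    have h3 : 0 ≤ (B ^ 2 - 1) * (12 - (9/4) * Real.exp 1) :=
      mul_nonneg (by linarith) (by linarith)
    have h4 : 2 * (K / τ) = 2 * K / τ := by ring
    rw [hArw, ← h4]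
    nlinarith [h1, h2, h3, heU]
  -- pointwise bound on the score on the interval
  have hmain : ∀ u ∈ Set.Icc (-(B * Real.sqrt τ)) (B * Real.sqrt τ),
      (p' u / p u) ^ 2 ≤ A / τ := by
    intro u hu
    have hu2 : u ^ 2 ≤ B ^ 2 * τ := by
      have h1 : |u| ≤ B * Real.sqrt τ := abs_le.mpr ⟨hu.1, hu.2⟩
      calc u ^ 2 = |u| ^ 2 := (sq_abs u).symm
        _ ≤ (B * Real.sqrt τ) ^ 2 := pow_le_pow_left₀ (abs_nonneg u) h1 2
        _ = B ^ 2 * τ := by rw [mul_pow, hst2]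
    obtain ⟨G, hGdef⟩ : ∃ G : ℝ → ℝ, G = fun s => Real.exp (-((u - s) ^ 2) / (2 * τ)) :=
      ⟨_, rfl⟩
    have hGpos : ∀ s, 0 < G s := by
      intro s; simp only [hGdef]; exact Real.exp_pos _
    have hGle1 : ∀ s, G s ≤ 1 := by
      intro s
      simp only [hGdef]
      rw [← Real.exp_zero]
      apply Real.exp_le_exp.mpr
      have h1 : (0:ℝ) ≤ (u - s) ^ 2 := sq_nonneg _
      apply div_nonpos_of_nonpos_of_nonneg (by linarith) (by linarith)
    have hGcont : Continuous G := by
      rw [hGdef]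
      apply Real.continuous_exp.comp
      fun_prop
    have hGint : Integrable G μ := by
      apply Integrable.mono' (integrable_const (1:ℝ)) hGcont.aestronglyMeasurable
      filter_upwards with s
      rw [Real.norm_eq_abs, abs_of_pos (hGpos s)]
      exact hGle1 s
    have hGrint : Integrable (fun s => G s ^ r) μ := by
      apply Integrable.mono' (integrable_const (1:ℝ))
      · exact (hGcont.rpow_const fun s => Or.inr hr0).aestronglyMeasurable
      · filter_upwards with s
        rw [Real.norm_eq_abs, abs_of_nonneg (Real.rpow_nonneg (hGpos s).le r)]
        exact Real.rpow_le_one (hGpos s).le (hGle1 s) hr0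
    obtain ⟨I, hIdef⟩ : ∃ I : ℝ, I = ∫ s, G s ∂μ := ⟨_, rfl⟩
    have hpu : p u = (Real.sqrt (2 * Real.pi * τ))⁻¹ * I := by
      rw [hp u, hIdef]
      simp only [gauss, hGdef]
      rw [MeasureTheory.integral_const_mul]
    obtain ⟨lam, hlamdef⟩ : ∃ lam : ℝ, lam = Real.exp (-(A / 2)) := ⟨_, rfl⟩
    have hlampos : 0 < lam := by rw [hlamdef]; exact Real.exp_pos _
    have hlamI : lam ≤ I := by
      have hlam2 : lam = Real.exp (-1) * Real.exp (-Q / (2 * τ)) := by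
        rw [hlamdef, ← Real.exp_add]
        congr 1
        rw [hAdef]
        field_simp
        ring
      have hind : ∫ s, E.indicator (fun _ => Real.exp (-Q / (2 * τ))) s ∂μ ≤ I := by
        rw [hIdef]
        apply integral_mono ((integrable_const _).indicator hEm) hGint
        intro s
        by_cases hs : s ∈ E
        · rw [Set.indicator_of_mem hs]
          simp only [hGdef]
          rw [hEdef] at hs
          have hsE : s ^ 2 ≤ c * K := hs
          have hQs : (u - s) ^ 2 ≤ Q := by
            rw [hQdef]
            nlinarith [sq_nonneg (5 * u + 4 * s), sq_nonneg (5 * u - 4 * s), hu2, hsE]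
          apply Real.exp_le_exp.mpr
          rw [div_le_div_iff₀ (by linarith : (0:ℝ) < 2 * τ) (by linarith : (0:ℝ) < 2 * τ)]
          nlinarith [mul_le_mul_of_nonneg_right hQs (by linarith : (0:ℝ) ≤ 2 * τ)]
        · rw [Set.indicator_of_notMem hs]
          exact (hGpos s).le
      rw [integral_indicator_const _ hEm, smul_eq_mul] at hind
      have h1 := mul_le_mul_of_nonneg_right hcheb (Real.exp_nonneg (-Q / (2 * τ)))
      rw [hlam2]
      exact le_trans h1 hind
    have hI0 : 0 < I := lt_of_lt_of_le hlampos hlamI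
    have hpu0 : 0 < p u := by rw [hpu]; exact mul_pos hc0 hI0
    obtain ⟨J, hJdef⟩ : ∃ J : ℝ, J = ∫ s, G s ^ r ∂μ := ⟨_, rfl⟩
    have hJI : J ≤ Real.exp 2⁻¹ * I := by
      have hpt : ∀ s, Real.exp (-2⁻¹) * G s ^ r ≤ r * G s + (1 - r) * lam := by
        intro s
        have hgm := Real.geom_mean_le_arith_mean2_weighted hr0 (by linarith : (0:ℝ) ≤ 1 - r)
          (hGpos s).le hlampos.le (by ring)
        have hlr : lam ^ ((1:ℝ) - r) = Real.exp (-2⁻¹) := by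
          rw [hlamdef, ← Real.exp_mul]
          congr 1
          rw [hrdef]
          have hAne : A ≠ 0 := ne_of_gt hA0
          field_simp
          ring
        calc Real.exp (-2⁻¹) * G s ^ r = G s ^ r * lam ^ ((1:ℝ) - r) := by rw [hlr]; ring
          _ ≤ r * G s + (1 - r) * lam := hgm
      have hI1 : ∫ s, Real.exp (-2⁻¹) * G s ^ r ∂μ ≤ ∫ s, (r * G s + (1 - r) * lam) ∂μ :=
        integral_mono (hGrint.const_mul _) ((hGint.const_mul r).add (integrable_const _)) hpt
      rw [MeasureTheory.integral_const_mul,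
        integral_add (hGint.const_mul r) (integrable_const _),
        MeasureTheory.integral_const_mul, integral_const] at hI1
      simp only [probReal_univ, one_smul] at hI1
      rw [← hIdef, ← hJdef] at hI1
      have h2 : (1 - r) * lam ≤ (1 - r) * I :=
        mul_le_mul_of_nonneg_left hlamI (by linarith)
      have h3 : Real.exp (-2⁻¹) * J ≤ I := by nlinarith
      have h4 : Real.exp 2⁻¹ * (Real.exp (-2⁻¹) * J) ≤ Real.exp 2⁻¹ * I :=
        mul_le_mul_of_nonneg_left h3 (Real.exp_nonneg _)
      calc J = Real.exp 2⁻¹ * (Real.exp (-2⁻¹) * J) := by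
              rw [← mul_assoc, ← Real.exp_add]; norm_num
        _ ≤ Real.exp 2⁻¹ * I := h4
    obtain ⟨D, hDdef⟩ : ∃ D : ℝ, D = Real.sqrt (A * τ / Real.exp 1) := ⟨_, rfl⟩
    have hD0 : 0 ≤ D := by rw [hDdef]; exact Real.sqrt_nonneg _
    have hp'bound : |p' u| ≤ (Real.sqrt (2 * Real.pi * τ))⁻¹ * (D / τ) * J := by
      rw [hp' u]
      calc |∫ s, -((u - s) / τ) * gauss τ (u - s) ∂μ|
          ≤ ∫ s, |u - s| / τ * |gauss τ (u - s)| ∂μ := by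
            have h := norm_integral_le_integral_norm (μ := μ)
              (f := fun s => -((u - s) / τ) * gauss τ (u - s))
            simpa [Real.norm_eq_abs, abs_mul, abs_div, abs_neg, abs_of_pos hτ] using h
        _ ≤ ∫ s, (Real.sqrt (2 * Real.pi * τ))⁻¹ * (D / τ) * G s ^ r ∂μ := by
            apply integral_mono_of_nonneg (Filter.Eventually.of_forall fun s =>
              mul_nonneg (div_nonneg (abs_nonneg _) hτ.le) (abs_nonneg _))
              (hGrint.const_mul _) (Filter.Eventually.of_forall ?_)
            intro s
            show |u - s| / τ * |gauss τ (u - s)| ≤ (Real.sqrt (2 * Real.pi * τ))⁻¹ * (D / τ) * G s ^ r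
            have hkey := aux_key A τ (u - s) hτ hA1
            rw [← hDdef] at hkey
            have hgabs : |gauss τ (u - s)| = (Real.sqrt (2 * Real.pi * τ))⁻¹ * G s := by
              simp only [hGdef, gauss]
              rw [abs_of_nonneg (by positivity)]
            rw [hgabs]
            have hkey2 : |u - s| * G s ≤ D * G s ^ r := by
              simp only [hGdef, hrdef]
              exact hkey
            calc |u - s| / τ * ((Real.sqrt (2 * Real.pi * τ))⁻¹ * G s)
                = ((Real.sqrt (2 * Real.pi * τ))⁻¹ / τ) * (|u - s| * G s) := by ring
              _ ≤ ((Real.sqrt (2 * Real.pi * τ))⁻¹ / τ) * (D * G s ^ r) :=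
                  mul_le_mul_of_nonneg_left hkey2 (by positivity)
              _ = (Real.sqrt (2 * Real.pi * τ))⁻¹ * (D / τ) * G s ^ r := by ring
        _ = (Real.sqrt (2 * Real.pi * τ))⁻¹ * (D / τ) * J := by
            rw [MeasureTheory.integral_const_mul, ← hJdef]
    obtain ⟨C, hCdef⟩ : ∃ C : ℝ, C = D * Real.exp 2⁻¹ / τ := ⟨_, rfl⟩
    have hC0 : 0 ≤ C := by
      rw [hCdef]
      exact div_nonneg (mul_nonneg hD0 (Real.exp_nonneg _)) hτ.le
    have hfinal : |p' u| ≤ C * p u := by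
      have h1 : (Real.sqrt (2 * Real.pi * τ))⁻¹ * (D / τ) * J
          ≤ (Real.sqrt (2 * Real.pi * τ))⁻¹ * (D / τ) * (Real.exp 2⁻¹ * I) := by
        apply mul_le_mul_of_nonneg_left hJI
        positivity
      have h2 : (Real.sqrt (2 * Real.pi * τ))⁻¹ * (D / τ) * (Real.exp 2⁻¹ * I)
          = C * p u := by
        rw [hpu, hCdef]; ring
      linarith [hp'bound]
    have hCsq : C ^ 2 = A / τ := by
      rw [hCdef, div_pow, mul_pow, hDdef,
        Real.sq_sqrt (by positivity : (0:ℝ) ≤ A * τ / Real.exp 1)]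
      have hexp : Real.exp 2⁻¹ ^ 2 = Real.exp 1 := by
        rw [sq, ← Real.exp_add]; norm_num
      rw [hexp]
      field_simp
    have habs : |p' u / p u| ≤ C := by
      rw [abs_div, abs_of_pos hpu0, div_le_iff₀ hpu0]
      exact hfinal
    calc (p' u / p u) ^ 2 = |p' u / p u| ^ 2 := (sq_abs _).symm
      _ ≤ C ^ 2 := pow_le_pow_left₀ (abs_nonneg _) habs 2
      _ = A / τ := hCsq
  -- assemble
  have hRHS0 : 0 ≤ 8 * B ^ 3 / (Real.sqrt τ * Real.exp 1) * (3 + 2 * K / τ) := by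
    have h1 : (0:ℝ) < B ^ 3 := pow_pos hB0 3
    have h2 : (0:ℝ) ≤ 2 * K / τ := by positivity
    apply mul_nonneg (div_nonneg (by linarith) (by positivity))
    linarith
  have hab : -(B * Real.sqrt τ) ≤ B * Real.sqrt τ := by
    have := mul_pos hB0 hτ'; linarith
  by_cases hInt : IntervalIntegrable (fun u => (p' u / p u) ^ 2) volume
      (-(B * Real.sqrt τ)) (B * Real.sqrt τ)
  · have h1 : ∫ u in (-(B * Real.sqrt τ))..(B * Real.sqrt τ), (p' u / p u) ^ 2
        ≤ ∫ u in (-(B * Real.sqrt τ))..(B * Real.sqrt τ), (A / τ) :=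
      intervalIntegral.integral_mono_on hab hInt (intervalIntegrable_const) hmain
    rw [intervalIntegral.integral_const, smul_eq_mul] at h1
    have h3 : (B * Real.sqrt τ - -(B * Real.sqrt τ)) * (A / τ)
        ≤ 8 * B ^ 3 / (Real.sqrt τ * Real.exp 1) * (3 + 2 * K / τ) := by
      have hlhs : (B * Real.sqrt τ - -(B * Real.sqrt τ)) * (A / τ)
          = 2 * B * A / Real.sqrt τ := by
        rw [eq_div_iff (ne_of_gt hτ')]
        calc _ = 2 * B * A * (Real.sqrt τ ^ 2 / τ) := by ring
          _ = 2 * B * A := by rw [hst2, div_self (ne_of_gt hτ), mul_one]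
      have hrhs : 8 * B ^ 3 / (Real.sqrt τ * Real.exp 1) * (3 + 2 * K / τ)
          = (2 * B * (4 * B ^ 2 * (3 + 2 * K / τ)) / Real.exp 1) / Real.sqrt τ := by
        field_simp; ring
      rw [hlhs, hrhs]
      rw [div_le_div_iff₀ hτ' hτ']
      apply mul_le_mul_of_nonneg_right ?_ hτ'.le
      rw [le_div_iff₀ hepos]
      calc 2 * B * A * Real.exp 1 = 2 * B * (Real.exp 1 * A) := by ring
        _ ≤ 2 * B * (4 * B ^ 2 * (3 + 2 * K / τ)) :=
          mul_le_mul_of_nonneg_left hnum (by linarith)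
    linarith
  · rw [intervalIntegral.integral_undef hInt]
    exact hRHS0
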